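/- Let R(α), R(β) be the explicit 8×8 integer matrices: R(α) is block-diagonal with four 2×2 blocks [[0,−1],[1,0]]; R(β) is the 8×8 matrix with rows (1,0,−1,−1,0,0,0,0), (0,−1,−1,1,0,0,0,0), (1,1,0,−1,0,0,0,0), (1,−1,−1,0,0,0,0,0), (0,0,0,−1,0,0,0,1), (0,0,−1,0,0,0,1,0), (1,1,0,−1,0,−1,0,0), (1,−1,−1,0,−1,0,0,0). Then R(α)² = R(β)² = −I₈ and R(β)R(α) = −R(α)R(β); consequently the assignment i ↦ R(α), j ↦ R(β) defines a ring homomorphism from the Lipschitz order ℤ⟨i,j⟩ ⊂ (−1,−1|ℚ) into M₈(ℤ). -/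

import Mathlib

open scoped Quaternion

/-- The matrix `R(α)` of the automorphism `α` on `H₁(C,ℤ) ≅ ℤ⁸`: block-diagonal
with four `2×2` blocks `[[0,−1],[1,0]]`. -/
def Ralpha : Matrix (Fin 8) (Fin 8) ℤ :=
  !![0,-1,0,0,0,0,0,0;
     1,0,0,0,0,0,0,0;
     0,0,0,-1,0,0,0,0;
     0,0,1,0,0,0,0,0;
     0,0,0,0,0,-1,0,0;
     0,0,0,0,1,0,0,0;
     0,0,0,0,0,0,0,-1;
     0,0,0,0,0,0,1,0]

/-- The matrix `R(β)` of the automorphism `β` on `H₁(C,ℤ) ≅ ℤ⁸`. -/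
def Rbeta : Matrix (Fin 8) (Fin 8) ℤ :=
  !![1,0,-1,-1,0,0,0,0;
     0,-1,-1,1,0,0,0,0;
     1,1,0,-1,0,0,0,0;
     1,-1,-1,0,0,0,0,0;
     0,0,0,-1,0,0,0,1;
     0,0,-1,0,0,0,1,0;
     1,1,0,-1,0,-1,0,0;
     1,-1,-1,0,-1,0,0,0]

lemma ra_sq : Ralpha * Ralpha = -1 := by decide

lemma rb_sq : Rbeta * Rbeta = -1 := by decide

lemma anticomm : Rbeta * Ralpha = -(Ralpha * Rbeta) := by decide

noncomputable def qb : QuaternionAlgebra.Basis (Matrix (Fin 8) (Fin 8) ℤ) (-1 : ℤ) (0 : ℤ) (-1 : ℤ) where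
  i := Ralpha
  j := Rbeta
  k := Ralpha * Rbeta
  i_mul_i := by rw [ra_sq]; simp
  j_mul_j := by rw [rb_sq]; simp
  i_mul_j := rfl
  j_mul_i := by rw [anticomm]; simp [sub_eq_add_neg]

theorem lipschitz_order_maps_to_M8Z :
    Ralpha * Ralpha = -1 ∧ Rbeta * Rbeta = -1 ∧
    Rbeta * Ralpha = -(Ralpha * Rbeta) ∧
    ∃ φ : ℍ[ℤ,-1,-1] →+* Matrix (Fin 8) (Fin 8) ℤ,
      φ ⟨0, 1, 0, 0⟩ = Ralpha ∧ φ ⟨0, 0, 1, 0⟩ = Rbeta := by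
  refine ⟨ra_sq, rb_sq, anticomm, (qb.liftHom).toRingHom, ?_, ?_⟩
  · show qb.lift _ = _
    simp [QuaternionAlgebra.Basis.lift, qb]
  · show qb.lift _ = _
    simp [QuaternionAlgebra.Basis.lift, qb]
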